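/- arXiv:math/0004085 — 13 statements merged into one kernel-verified Lean document; each statement's English description precedes it below -/
import Mathlib

section
/- Fix a real parameter a with a < 1 and a ≠ 0, and set E(n) = (1-a)^(-n/2) for real n. For every real n > 2 one has n·C_15(n) - 2·C_6(n) + C_11(n) - C_12(n) = D_5(n), where C_6, C_11, C_12, C_15, D_5 are defined in the context. (This is the consistency of the paper's heat invariant E_2 with its stated Lorentz trace: contracting the terms C_6·(D_α T^{μαν} + D_α T^{ναμ}) + C_11·D^{μ}T^{ν} - C_12·D^{ν}T^{μ} + C_15·g^{μν}·D_α T^α of E_2 with g_{μν}, using the antisymmetry of the torsion tensor and the torsion trace T_μ = T^{α}_{αμ}, must produce the term D_5·D_α T^α of tr_L E_2.) -/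
theorem stmt_4 (a : ℝ) (ha1 : a < 1) (ha0 : a ≠ 0) :
    ∀ n : ℝ, 2 < n →
      n * (((1 - a) ^ (-(n / 2)) * (-a^2*n^2 - 2*a^2*n + a*n^2 + 8*a*n + 12*a - 24) + a*n^3 - a*n^2 - 12*a + 24) / (6*a*(n-2)*n*(n+2))) - 2 * (((1 - a) ^ (-(n / 2)) * (a^3*n^2 + 2*a^3*n - a^2*n^2 - 20*a^2*n - 36*a^2 + 12*a*n + 96*a - 48) + a^2*n^2 - 16*a^2*n + 36*a^2 + 12*a*n - 96*a + 48) / (6*a^2*(n-2)*n*(n+2))) + (((1-a) * (1 - a) ^ (-(n / 2)) * (-9*a^2*n^2 - 18*a^2*n + 76*a*n + 152*a - 24) + 2*(-13*a^2*n^2 + 6*a^2*n + 76*a^2 - 32*a*n - 88*a + 12)) / (3*a^2*(n-2)*n*(n+2))) - ((2*(1-a) * (1 - a) ^ (-(n / 2)) * (-5*a^2*n^2 - 10*a^2*n + 38*a*n + 76*a + 12) - 31*a^2*n^2 + 26*a^2*n + 152*a^2 - 88*a*n - 128*a - 24) / (3*a^2*(n-2)*n*(n+2)))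
      =
      (-((1 - a) ^ (-(n / 2))) * (a^2*n^2 + 4*a^2*n - a*n^2 - 10*a*n - 36*a + 48) + a*n^3 - 3*a*n^2 + 14*a*n - 36*a + 48) / (6*a*(n-2)*n) := by
  intro n hn
  have h2 : n - 2 ≠ 0 := by linarith
  have hn0 : n ≠ 0 := by linarith
  have h2' : n + 2 ≠ 0 := by linarith
  set E : ℝ := (1 - a) ^ (-(n / 2)) with hE
  field_simp
  ring
end

section
/- Fix a real parameter a with a < 1 and a ≠ 0, and set E(n) = (1-a)^(-n/2) for real n. The function C_3 defined in the context tends, as real n tends to 2 with n ≠ 2, to the limit -((a-4)·ln(1-a))/(2a) + 2. (This is the paper's dimension n = 2 value of the coefficient C_3 in the heat invariant E_2 of the nonminimal operator on a 2-dimensional manifold with torsion.) -/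
theorem stmt_6 (a : ℝ) (ha1 : a < 1) (ha0 : a ≠ 0) :
    Filter.Tendsto
      (fun n : ℝ =>
        ((1-a) * (1 - a) ^ (-(n / 2)) * (a*n - 8) + 3*a*n - 8*a + 8) / (a*(n-2)*n))
      (nhdsWithin (2 : ℝ) {(2 : ℝ)}ᶜ)
      (nhds (-((a - 4) * Real.log (1 - a)) / (2*a) + 2)) := by
  have hb : (0:ℝ) < 1 - a := by linarith
  set g : ℝ → ℝ := fun n => (1-a) * (1 - a) ^ (-(n / 2)) * (a*n - 8) + 3*a*n - 8*a + 8 with hgdef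
  set D : ℝ := -(a-4) * Real.log (1-a) + 4*a with hD
  have h1 : HasDerivAt (fun n : ℝ => -(n/2)) (-(1/2)) 2 := by
    exact (((hasDerivAt_id (2:ℝ)).div_const 2).neg).congr_deriv (by norm_num)
  have h2 : HasDerivAt (fun n : ℝ => (1-a) ^ (-(n/2)))
      ((1-a) ^ (-(2/2:ℝ)) * Real.log (1-a) * (-(1/2))) 2 :=
    (Real.hasStrictDerivAt_const_rpow hb (-(2/2:ℝ))).hasDerivAt.comp 2 h1
  have h3 : HasDerivAt (fun n : ℝ => a*n - 8) a 2 := by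
    simpa using ((hasDerivAt_id (2:ℝ)).const_mul a).sub_const 8
  have hg : HasDerivAt g D 2 := by
    have h4 := ((h2.const_mul (1-a)).mul h3)
    have h5 := ((h4.add (((hasDerivAt_id (2:ℝ)).const_mul (3*a)).sub_const (8*a))).add_const 8)
    refine HasDerivAt.congr_of_eventuallyEq (h5.congr_deriv ?_) (Filter.EventuallyEq.of_eq ?_)
    swap
    · ext n; simp [hgdef]; ring
    · have : ((1:ℝ)-a) ^ (-(2/2:ℝ)) = (1-a)⁻¹ := by
        norm_num [Real.rpow_neg_one]
      rw [this]
      field_simp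
      ring
  have hslope : Filter.Tendsto (slope g 2) (nhdsWithin (2:ℝ) {(2:ℝ)}ᶜ) (nhds D) :=
    hasDerivAt_iff_tendsto_slope.mp hg
  have hg2 : g 2 = 0 := by
    have h : ((1:ℝ)-a) ^ (-((2:ℝ)/2)) = (1-a)⁻¹ := by norm_num [Real.rpow_neg_one]
    simp only [hgdef]
    rw [h]
    field_simp
    ring
  have hcont : Filter.Tendsto (fun n : ℝ => (a*n)⁻¹) (nhdsWithin (2:ℝ) {(2:ℝ)}ᶜ)
      (nhds ((a*2)⁻¹)) := by
    apply Filter.Tendsto.mono_left _ nhdsWithin_le_nhds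
    exact (ContinuousAt.inv₀ (by fun_prop) (by simp [ha0])).tendsto
  have hmul := hslope.mul hcont
  have heq : ∀ n : ℝ, n ≠ 2 → slope g 2 n * (a*n)⁻¹ = g n / (a*(n-2)*n) := by
    intro n hn
    rw [slope_def_field, hg2]
    have hn2 : n - 2 ≠ 0 := sub_ne_zero.mpr hn
    field_simp
    ring
  have : Filter.Tendsto g (nhdsWithin (2:ℝ) {(2:ℝ)}ᶜ) (nhds (g 2)) := by
    exact (hg.continuousAt.tendsto).mono_left nhdsWithin_le_nhds
  have hfinal : D * (a*2)⁻¹ = -((a - 4) * Real.log (1 - a)) / (2*a) + 2 := by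
    rw [hD]; field_simp; ring
  rw [← hfinal]
  apply hmul.congr'
  filter_upwards [self_mem_nhdsWithin] with n hn
  exact heq n hn
end

section
/- Fix a real parameter a with a < 1 and a ≠ 0, and set E(n) = (1-a)^(-n/2) for real n. The function C_4 defined in the context tends, as real n tends to 2 with n ≠ 2, to the limit ((17a - 67)·ln(1-a))/(12a) + (137a - 134)/(24·(1-a)). (This is the paper's dimension n = 2 value of the coefficient C_4 in the heat invariant E_2 of the nonminimal operator on a 2-dimensional manifold with torsion.) -/
theorem stmt_7 (a : ℝ) (ha1 : a < 1) (ha0 : a ≠ 0) :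
    Filter.Tendsto
      (fun n : ℝ =>
        ((1 - a) ^ (-(n / 2)) * (17*a^2*n^2 + 34*a^2*n - 17*a*n^2 - 168*a*n - 268*a + 140*n + 256) - 53*a*n^2 + 40*a*n + 268*a - 140*n - 256) / (6*a*(n-2)*n*(n+2)))
      (nhdsWithin (2 : ℝ) {(2 : ℝ)}ᶜ)
      (nhds (((17*a - 67) * Real.log (1 - a)) / (12*a) + (137*a - 134) / (24*(1-a)))) := by
  have h1a : (0:ℝ) < 1 - a := by linarith
  have h1a' : (1:ℝ) - a ≠ 0 := ne_of_gt h1a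
  set F : ℝ → ℝ := fun n =>
    ((1 - a) ^ (-(n / 2)) * ((17*a^2 - 17*a)*n^2 + (34*a^2 - 168*a + 140)*n + (256 - 268*a))
      - ((53*a)*n^2 + (140 - 40*a)*n + (256 - 268*a))) / (6*a*n^2 + 12*a*n) with hFdef
  -- derivative pieces
  have hid : HasDerivAt (fun n : ℝ => n) 1 2 := hasDerivAt_id 2
  have hsq : HasDerivAt (fun n : ℝ => n^2) (2*2) 2 := by
    simpa using hasDerivAt_pow 2 (2:ℝ)
  have hconst : HasDerivAt (fun n : ℝ => -(n/2)) (-(1/2)) 2 := by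
    exact (hid.div_const 2).neg.congr_deriv (by norm_num)
  have hE : HasDerivAt (fun n : ℝ => (1-a) ^ (-(n/2)))
      (((1-a) ^ (-(2/2):ℝ) * Real.log (1-a)) * (-(1/2))) 2 :=
    ((Real.hasStrictDerivAt_const_rpow h1a (-(2/2))).hasDerivAt).comp 2 hconst
  have hP : HasDerivAt (fun n : ℝ => (17*a^2 - 17*a)*n^2 + (34*a^2 - 168*a + 140)*n + (256 - 268*a))
      ((17*a^2 - 17*a)*(2*2) + (34*a^2 - 168*a + 140)*1) 2 :=
    ((hsq.const_mul _).add (hid.const_mul _)).add_const _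
  have hQ : HasDerivAt (fun n : ℝ => (53*a)*n^2 + (140 - 40*a)*n + (256 - 268*a))
      ((53*a)*(2*2) + (140 - 40*a)*1) 2 :=
    ((hsq.const_mul _).add (hid.const_mul _)).add_const _
  have hDen : HasDerivAt (fun n : ℝ => 6*a*n^2 + 12*a*n)
      ((6*a)*(2*2) + (12*a)*1) 2 := by
    exact ((hsq.const_mul (6*a)).add (hid.const_mul (12*a)))
  have hden2 : 6*a*(2:ℝ)^2 + 12*a*2 ≠ 0 := by
    intro h; apply ha0; nlinarith [h]
  have hF : HasDerivAt F _ 2 := ((hE.mul hP).sub hQ).div hDen hden2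
  have hF' : HasDerivAt F (((17*a - 67) * Real.log (1 - a)) / (12*a) + (137*a - 134) / (24*(1-a))) 2 := by
    convert hF using 1
    simp only [Pi.mul_apply, Pi.sub_apply]
    rw [show (-(2/2):ℝ) = -1 by norm_num, Real.rpow_neg_one]
    field_simp
    ring
  have hslope := hasDerivAt_iff_tendsto_slope.mp hF'
  have hF2 : F 2 = 0 := by
    rw [hFdef]
    simp only
    rw [show (-((2:ℝ)/2)) = -1 by norm_num, Real.rpow_neg_one]
    field_simp
    ring
  refine hslope.congr (fun n => ?_)
  rw [slope_def_field, hF2, sub_zero, hFdef]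
  simp only
  rw [div_div]
  ring
end

section
/- Fix a real parameter a with a < 1 and a ≠ 0, and set E(n) = (1-a)^(-n/2) for real n. The function C_5 defined in the context tends, as real n tends to 2 with n ≠ 2, to the limit ((15a - 61)·ln(1-a))/(12a) + (119a - 122)/(24·(1-a)). (This is the paper's dimension n = 2 value of the coefficient C_5 in the heat invariant E_2 of the nonminimal operator on a 2-dimensional manifold with torsion.) -/
theorem stmt_8 (a : ℝ) (ha1 : a < 1) (ha0 : a ≠ 0) :
    Filter.Tendsto
      (fun n : ℝ =>
        ((1 - a) ^ (-(n / 2)) * (15*a^2*n^2 + 30*a^2*n - 15*a*n^2 - 152*a*n - 244*a + 116*n + 256) - 43*a*n^2 + 24*a*n + 244*a - 116*n - 256) / (6*a*(n-2)*n*(n+2)))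
      (nhdsWithin (2 : ℝ) {(2 : ℝ)}ᶜ)
      (nhds (((15*a - 61) * Real.log (1 - a)) / (12*a) + (119*a - 122) / (24*(1-a)))) := by
  have h1a : (0:ℝ) < 1 - a := by linarith
  have hne : (1:ℝ) - a ≠ 0 := ne_of_gt h1a
  set F : ℝ → ℝ := fun n =>
    Real.exp (-(n/2) * Real.log (1-a)) * (15*a^2*n^2 + 30*a^2*n - 15*a*n^2 - 152*a*n - 244*a + 116*n + 256)
      + (-43*a*n^2 + 24*a*n + 244*a - 116*n - 256) with hFdef
  have hn : HasDerivAt (fun n:ℝ => n) 1 2 := hasDerivAt_id 2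
  have hn2 : HasDerivAt (fun n:ℝ => n^2) 4 2 := by
    have := hasDerivAt_pow 2 (2:ℝ); norm_num at this; exact this
  have hu : HasDerivAt (fun n:ℝ => -(n/2) * Real.log (1-a)) (-(1/2) * Real.log (1-a)) 2 := by
    simpa using ((hasDerivAt_id (2:ℝ)).div_const 2).neg.mul_const (Real.log (1-a))
  have hexp : HasDerivAt (fun n:ℝ => Real.exp (-(n/2) * Real.log (1-a)))
      (Real.exp (-(2/2:ℝ) * Real.log (1-a)) * (-(1/2) * Real.log (1-a))) 2 := hu.exp
  have hP : HasDerivAt (fun n:ℝ => 15*a^2*n^2 + 30*a^2*n - 15*a*n^2 - 152*a*n - 244*a + 116*n + 256)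
      (90*a^2 - 212*a + 116) 2 := by
    have h := ((((((hn2.const_mul (15*a^2)).add (hn.const_mul (30*a^2))).sub
      (hn2.const_mul (15*a))).sub (hn.const_mul (152*a))).sub_const (244*a)).add
      (hn.const_mul 116)).add_const 256
    convert h using 1
    · rfl
    · rfl
    · rfl
    ring
  have hQ : HasDerivAt (fun n:ℝ => -43*a*n^2 + 24*a*n + 244*a - 116*n - 256)
      (-148*a - 116) 2 := by
    have h := (((((hn2.const_mul (43*a)).neg.add (hn.const_mul (24*a))).add_const
      (244*a)).sub (hn.const_mul 116)).sub_const 256)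
    convert h using 1
    · rfl
    · rfl
    · funext x; simp only [Pi.neg_apply, Pi.add_apply, Pi.sub_apply]; ring
    · ring
  have hF : HasDerivAt F
      ((Real.exp (-(2/2:ℝ) * Real.log (1-a)) * (-(1/2) * Real.log (1-a))) *
        (15*a^2*2^2 + 30*a^2*2 - 15*a*2^2 - 152*a*2 - 244*a + 116*2 + 256)
       + Real.exp (-(2/2:ℝ) * Real.log (1-a)) * (90*a^2 - 212*a + 116)
       + (-148*a - 116)) 2 := (hexp.mul hP).add hQ
  have hEL : Real.exp (-(2/2:ℝ) * Real.log (1-a)) = (1-a)⁻¹ := by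
    rw [show -(2/2:ℝ) * Real.log (1-a) = -Real.log (1-a) by ring, Real.exp_neg,
      Real.exp_log h1a]
  have hF2 : F 2 = 0 := by
    simp only [hFdef]
    rw [hEL]
    field_simp
    ring
  have hslope := hasDerivAt_iff_tendsto_slope.mp hF
  have hg : Filter.Tendsto (fun n:ℝ => (6*a*n*(n+2))⁻¹) (nhdsWithin (2:ℝ) {(2:ℝ)}ᶜ)
      (nhds ((48*a)⁻¹)) := by
    have hc : ContinuousAt (fun n:ℝ => (6*a*n*(n+2))⁻¹) 2 := by
      apply ContinuousAt.inv₀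
      · fun_prop
      · show 6*a*2*(2+2) ≠ 0
        intro h; apply ha0; nlinarith [h]
    have := hc.tendsto.mono_left (nhdsWithin_le_nhds (s := {(2:ℝ)}ᶜ))
    convert this using 2
    norm_num
    ring
  have hmul := hslope.mul hg
  have heq : ∀ n : ℝ,
      ((1 - a) ^ (-(n / 2)) * (15*a^2*n^2 + 30*a^2*n - 15*a*n^2 - 152*a*n - 244*a + 116*n + 256) - 43*a*n^2 + 24*a*n + 244*a - 116*n - 256) / (6*a*(n-2)*n*(n+2))
      = slope F 2 n * (6*a*n*(n+2))⁻¹ := by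
    intro n
    rw [slope_def_field, hF2, hFdef, Real.rpow_def_of_pos h1a,
      mul_comm (Real.log (1-a)) (-(n/2))]
    rw [div_eq_mul_inv, div_eq_mul_inv,
      show 6*a*(n-2)*n*(n+2) = (n-2)*(6*a*n*(n+2)) from by ring, mul_inv]
    ring
  have hval : ((Real.exp (-(2/2:ℝ) * Real.log (1-a)) * (-(1/2) * Real.log (1-a))) *
        (15*a^2*2^2 + 30*a^2*2 - 15*a*2^2 - 152*a*2 - 244*a + 116*2 + 256)
       + Real.exp (-(2/2:ℝ) * Real.log (1-a)) * (90*a^2 - 212*a + 116)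
       + (-148*a - 116)) * (48*a)⁻¹
      = ((15*a - 61) * Real.log (1 - a)) / (12*a) + (119*a - 122) / (24*(1-a)) := by
    rw [hEL]
    field_simp
    ring
  rw [← hval]
  exact Filter.Tendsto.congr (fun n => (heq n).symm) hmul
end

section
/- Fix a real parameter a with a < 1 and a ≠ 0, and set E(n) = (1-a)^(-n/2) for real n. The function C_6 defined in the context tends, as real n tends to 2 with n ≠ 2, to the limit ((a^2 - 9a + 6)·ln(1-a))/(12a^2) + ((3a - 2)·(a - 2))/(8a·(1-a)). (This is the paper's dimension n = 2 value of the coefficient C_6 in the heat invariant E_2 of the nonminimal operator on a 2-dimensional manifold with torsion.) -/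
theorem stmt_9 (a : ℝ) (ha1 : a < 1) (ha0 : a ≠ 0) :
    Filter.Tendsto
      (fun n : ℝ =>
        ((1 - a) ^ (-(n / 2)) * (a^3*n^2 + 2*a^3*n - a^2*n^2 - 20*a^2*n - 36*a^2 + 12*a*n + 96*a - 48) + a^2*n^2 - 16*a^2*n + 36*a^2 + 12*a*n - 96*a + 48) / (6*a^2*(n-2)*n*(n+2)))
      (nhdsWithin (2 : ℝ) {(2 : ℝ)}ᶜ)
      (nhds (((a^2 - 9*a + 6) * Real.log (1 - a)) / (12*a^2) + ((3*a - 2)*(a - 2)) / (8*a*(1-a)))) := by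
  have h1a : (0:ℝ) < 1 - a := by linarith
  have h1a' : (1:ℝ) - a ≠ 0 := ne_of_gt h1a
  set L := Real.log (1 - a) with hL
  set N : ℝ → ℝ := fun n =>
    (1 - a) ^ (-(n / 2)) * (a^3*n^2 + 2*a^3*n - a^2*n^2 - 20*a^2*n - 36*a^2 + 12*a*n + 96*a - 48)
      + (a^2*n^2 - 16*a^2*n + 36*a^2 + 12*a*n - 96*a + 48) with hNdef
  -- derivatives of the pieces at n = 2
  have hid : HasDerivAt (fun n : ℝ => n) 1 2 := hasDerivAt_id 2
  have hsq : HasDerivAt (fun n : ℝ => n ^ 2) 4 2 := by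
    have := hasDerivAt_pow 2 (2 : ℝ)
    norm_num at this
    exact this
  have hPder : HasDerivAt
      (fun n : ℝ => a^3*n^2 + 2*a^3*n - a^2*n^2 - 20*a^2*n - 36*a^2 + 12*a*n + 96*a - 48)
      (6*a^3 - 24*a^2 + 12*a) 2 := by
    have h1 := (hsq.const_mul (a^3)).add (hid.const_mul (2*a^3))
    have h2 := (h1.sub (hsq.const_mul (a^2))).sub (hid.const_mul (20*a^2))
    have h3 := (h2.sub_const (36*a^2)).add (hid.const_mul (12*a))
    have h := (h3.add_const (96*a)).sub_const 48
    refine h.congr_deriv ?_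
    ring
  have hQder : HasDerivAt
      (fun n : ℝ => a^2*n^2 - 16*a^2*n + 36*a^2 + 12*a*n - 96*a + 48)
      (-12*a^2 + 12*a) 2 := by
    have h1 := (hsq.const_mul (a^2)).sub (hid.const_mul (16*a^2))
    have h2 := (h1.add_const (36*a^2)).add (hid.const_mul (12*a))
    have h := (h2.sub_const (96*a)).add_const 48
    refine h.congr_deriv ?_
    ring
  have hinner : HasDerivAt (fun n : ℝ => -(n / 2)) (-(1/2)) 2 := by
    exact (hid.div_const 2).neg
  have hEder : HasDerivAt (fun n : ℝ => (1 - a) ^ (-(n / 2)))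
      ((1 - a) ^ (-((2:ℝ) / 2)) * L * (-(1/2))) 2 := by
    have h := ((Real.hasStrictDerivAt_const_rpow h1a (-((2:ℝ)/2))).hasDerivAt).comp 2 hinner
    exact h
  have hE2 : (1 - a) ^ (-((2:ℝ) / 2)) = (1 - a)⁻¹ := by
    norm_num [Real.rpow_neg_one]
  set D : ℝ :=
    ((1 - a) ^ (-((2:ℝ) / 2)) * L * (-(1/2))) * (a^3*2^2 + 2*a^3*2 - a^2*2^2 - 20*a^2*2 - 36*a^2 + 12*a*2 + 96*a - 48)
      + (1 - a) ^ (-((2:ℝ) / 2)) * (6*a^3 - 24*a^2 + 12*a) + (-12*a^2 + 12*a) with hD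
  have hNder : HasDerivAt N D 2 := by
    have h := (hEder.mul hPder).add hQder
    refine h.congr_deriv ?_
    all_goals norm_num [hD]
  have hN2 : N 2 = 0 := by
    rw [hNdef]
    simp only
    rw [hE2]
    field_simp
    ring
  have hslope : Filter.Tendsto (fun n : ℝ => N n / (n - 2)) (nhdsWithin 2 {(2:ℝ)}ᶜ) (nhds D) := by
    have h := hasDerivAt_iff_tendsto_slope.mp hNder
    refine h.congr (fun n => ?_)
    rw [slope_def_field, hN2, sub_zero]
  have hfac : Filter.Tendsto (fun n : ℝ => (6*a^2*n*(n+2))⁻¹) (nhdsWithin 2 {(2:ℝ)}ᶜ)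
      (nhds ((6*a^2*2*(2+2))⁻¹)) := by
    apply Filter.Tendsto.mono_left _ nhdsWithin_le_nhds
    apply Filter.Tendsto.inv₀
    · exact (Continuous.tendsto (by continuity) 2)
    · positivity
  have hmain := hslope.mul hfac
  have heq : (fun n : ℝ =>
        ((1 - a) ^ (-(n / 2)) * (a^3*n^2 + 2*a^3*n - a^2*n^2 - 20*a^2*n - 36*a^2 + 12*a*n + 96*a - 48) + a^2*n^2 - 16*a^2*n + 36*a^2 + 12*a*n - 96*a + 48) / (6*a^2*(n-2)*n*(n+2)))
      = fun n : ℝ => (N n / (n - 2)) * (6*a^2*n*(n+2))⁻¹ := by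
    funext n
    rw [hNdef]
    simp only [div_eq_mul_inv, mul_inv]
    ring
  rw [heq]
  convert hmain using 2
  rw [hD, hE2, hL]
  field_simp
  ring
end

section
/- Fix a real parameter a with a < 1 and a ≠ 0, and set E(n) = (1-a)^(-n/2) for real n. The function C_9 defined in the context tends, as real n tends to 2 with n ≠ 2, to the limit ((a - 2)·ln(1-a))/(4a^2) - (a^2 - 12a + 12)/(24a·(1-a)). (This is the paper's dimension n = 2 value of the coefficient C_9 in the heat invariant E_2 of the nonminimal operator on a 2-dimensional manifold with torsion.) -/
theorem stmt_12 (a : ℝ) (ha1 : a < 1) (ha0 : a ≠ 0) :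
    Filter.Tendsto
      (fun n : ℝ =>
        ((1 - a) ^ (-(n / 2)) * (a^2*n^2 + 6*a^2*n + 8*a^2 - 12*a*n - 48*a + 48) - a^2*n^2 + 6*a^2*n - 8*a^2 - 12*a*n + 48*a - 48) / (a^2*(n-2)*n*(n+2)*(n+4)))
      (nhdsWithin (2 : ℝ) {(2 : ℝ)}ᶜ)
      (nhds (((a - 2) * Real.log (1 - a)) / (4*a^2) - (a^2 - 12*a + 12) / (24*a*(1-a)))) := by
  have hb : (0:ℝ) < 1 - a := by linarith
  have hb' : (1:ℝ) - a ≠ 0 := ne_of_gt hb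
  set L := Real.log (1 - a) with hL
  set N : ℝ → ℝ := fun n => Real.exp (L * -(n/2)) * (a^2*n^2 + 6*a^2*n + 8*a^2 - 12*a*n - 48*a + 48) - (a^2*n^2 - 6*a^2*n + 8*a^2 + 12*a*n - 48*a + 48) with hN
  -- derivative of N at 2
  have hinner : HasDerivAt (fun n : ℝ => L * -(n/2)) (L * -(1/2)) 2 := by
    have := (((hasDerivAt_id (2:ℝ)).div_const 2).neg).const_mul L
    simpa using this
  have hexp : HasDerivAt (fun n : ℝ => Real.exp (L * -(n/2))) (Real.exp (L * -(2/2)) * (L * -(1/2))) 2 := hinner.exp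
  have hP : HasDerivAt (fun n : ℝ => a^2*n^2 + 6*a^2*n + 8*a^2 - 12*a*n - 48*a + 48) (a^2*(2*2^1) + ((6*a^2 - 12*a)*1)) 2 := by
    have h : HasDerivAt (fun n : ℝ => a^2*n^2 + ((6*a^2 - 12*a)*n + (8*a^2 - 48*a + 48))) (a^2*(2*2^1) + ((6*a^2 - 12*a)*1)) 2 :=
      ((hasDerivAt_pow 2 (2:ℝ)).const_mul (a^2)).add (((hasDerivAt_id (2:ℝ)).const_mul (6*a^2 - 12*a)).add_const (8*a^2 - 48*a + 48))
    exact h.congr_of_eventuallyEq (Filter.Eventually.of_forall (fun n => by ring))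
  have hQ : HasDerivAt (fun n : ℝ => a^2*n^2 - 6*a^2*n + 8*a^2 + 12*a*n - 48*a + 48) (a^2*(2*2^1) + ((12*a - 6*a^2)*1)) 2 := by
    have h : HasDerivAt (fun n : ℝ => a^2*n^2 + ((12*a - 6*a^2)*n + (8*a^2 - 48*a + 48))) (a^2*(2*2^1) + ((12*a - 6*a^2)*1)) 2 :=
      ((hasDerivAt_pow 2 (2:ℝ)).const_mul (a^2)).add (((hasDerivAt_id (2:ℝ)).const_mul (12*a - 6*a^2)).add_const (8*a^2 - 48*a + 48))
    exact h.congr_of_eventuallyEq (Filter.Eventually.of_forall (fun n => by ring))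
  have hNd : HasDerivAt N
      ((Real.exp (L * -(2/2)) * (L * -(1/2))) * (a^2*2^2 + 6*a^2*2 + 8*a^2 - 12*a*2 - 48*a + 48)
        + Real.exp (L * -(2/2)) * (a^2*(2*2^1) + ((6*a^2 - 12*a)*1))
        - (a^2*(2*2^1) + ((12*a - 6*a^2)*1))) 2 := (hexp.mul hP).sub hQ
  set D := ((Real.exp (L * -(2/2)) * (L * -(1/2))) * (a^2*2^2 + 6*a^2*2 + 8*a^2 - 12*a*2 - 48*a + 48)
        + Real.exp (L * -(2/2)) * (a^2*(2*2^1) + ((6*a^2 - 12*a)*1))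
        - (a^2*(2*2^1) + ((12*a - 6*a^2)*1))) with hD
  have hN2 : N 2 = 0 := by
    have he : Real.exp (L * -((2:ℝ)/2)) = (1 - a)⁻¹ := by
      rw [show L * -((2:ℝ)/2) = -L by ring, Real.exp_neg, hL, Real.exp_log hb]
    simp only [hN]
    rw [he]
    field_simp
    ring
  have h1 : Filter.Tendsto (fun n : ℝ => (N n - N 2) / (n - 2)) (nhdsWithin 2 {(2:ℝ)}ᶜ) (nhds D) := by
    have := hasDerivAt_iff_tendsto_slope.mp hNd
    refine this.congr (fun n => ?_)
    simp [slope_def_field, div_eq_div_iff]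
  have h2 : Filter.Tendsto (fun n : ℝ => 1/(a^2*n*(n+2)*(n+4))) (nhdsWithin 2 {(2:ℝ)}ᶜ) (nhds (1/(a^2*2*(2+2)*(2+4)))) := by
    have hc : ContinuousAt (fun n : ℝ => 1/(a^2*n*(n+2)*(n+4))) 2 := by
      apply ContinuousAt.div continuousAt_const (by fun_prop)
      positivity
    exact hc.continuousWithinAt
  have hval : ((a - 2) * L) / (4*a^2) - (a^2 - 12*a + 12) / (24*a*(1-a)) = D * (1/(a^2*2*(2+2)*(2+4))) := by
    have he : Real.exp (L * -((2:ℝ)/2)) = (1 - a)⁻¹ := by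
      rw [show L * -((2:ℝ)/2) = -L by ring, Real.exp_neg, hL, Real.exp_log hb]
    rw [hD, he]
    field_simp
    ring
  rw [hval]
  refine (h1.mul h2).congr' ?_
  filter_upwards [self_mem_nhdsWithin] with n hn
  have hn2 : n - 2 ≠ 0 := sub_ne_zero.mpr hn
  rw [hN2, sub_zero]
  have hrw : (1 - a) ^ (-(n / 2)) = Real.exp (L * -(n/2)) := by
    rw [Real.rpow_def_of_pos hb]
  rw [div_mul_div_comm, mul_one]
  rw [hrw]
  congr 1
  · simp only [hN]; ring
  · ring
end

section
/- Fix a real parameter a with a < 1 and a ≠ 0, and set E(n) = (1-a)^(-n/2) for real n. The function C_10 defined in the context tends, as real n tends to 2 with n ≠ 2, to the limit -((a^2 - 12a + 12)·ln(1-a))/(24a^2) - (2a^2 - 9a + 6)/(12a·(1-a)). (This is the paper's dimension n = 2 value of the coefficient C_10 in the heat invariant E_2 of the nonminimal operator on a 2-dimensional manifold with torsion.) -/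
theorem stmt_13 (a : ℝ) (ha1 : a < 1) (ha0 : a ≠ 0) :
    Filter.Tendsto
      (fun n : ℝ =>
        ((1 - a) ^ (-(n / 2)) * (-a^3*n^3 - 6*a^3*n^2 + a^2*n^3 - 8*a^3*n + 30*a^2*n^2 + 152*a^2*n + 192*a^2 - 192*a*n - 768*a + 576) - a^2*n^3 - 6*a^2*n^2 + 88*a^2*n - 192*a^2 - 96*a*n + 768*a - 576) / (12*a^2*(n-2)*n*(n+2)*(n+4)))
      (nhdsWithin (2 : ℝ) {(2 : ℝ)}ᶜ)
      (nhds (-((a^2 - 12*a + 12) * Real.log (1 - a)) / (24*a^2) - (2*a^2 - 9*a + 6) / (12*a*(1-a)))) := by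
  have h1a : (0:ℝ) < 1 - a := by linarith
  have h1a' : (1:ℝ) - a ≠ 0 := ne_of_gt h1a
  set c : ℝ := Real.log (1 - a) with hc
  -- coefficients
  set p3 : ℝ := a^2 - a^3 with hp3
  set p2 : ℝ := 30*a^2 - 6*a^3 with hp2
  set p1 : ℝ := 152*a^2 - 8*a^3 - 192*a with hp1
  set p0 : ℝ := 192*a^2 - 768*a + 576 with hp0
  set q3 : ℝ := -a^2 with hq3
  set q2 : ℝ := -6*a^2 with hq2
  set q1 : ℝ := 88*a^2 - 96*a with hq1
  set q0 : ℝ := -192*a^2 + 768*a - 576 with hq0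
  set G : ℝ → ℝ := fun n => Real.exp ((-c/2)*n) * (p3*n^3 + p2*n^2 + p1*n + p0)
      + (q3*n^3 + q2*n^2 + q1*n + q0) with hGdef
  have hexp2 : Real.exp ((-c/2)*2) = (1-a)⁻¹ := by
    rw [show (-c/2)*(2:ℝ) = -c by ring, Real.exp_neg, Real.exp_log h1a]
  have hG2 : G 2 = 0 := by
    simp only [hGdef, hexp2]
    field_simp
    ring
  -- derivative
  have hlin : HasDerivAt (fun n : ℝ => (-c/2)*n) (-c/2) 2 := by
    simpa using (hasDerivAt_id (2:ℝ)).const_mul (-c/2)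
  have hexp : HasDerivAt (fun n : ℝ => Real.exp ((-c/2)*n))
      (Real.exp ((-c/2)*2) * (-c/2)) 2 := hlin.exp
  have hP : HasDerivAt (fun n : ℝ => p3*n^3 + p2*n^2 + p1*n + p0)
      (p3*(3*2^2) + p2*(2*2) + p1) 2 := by
    have h := ((((hasDerivAt_pow 3 (2:ℝ)).const_mul p3).add
        ((hasDerivAt_pow 2 (2:ℝ)).const_mul p2)).add
        ((hasDerivAt_id (2:ℝ)).const_mul p1)).add_const p0
    have h2 := h.congr_deriv (show _ = p3*(3*2^2) + p2*(2*2) + p1 by norm_num)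
    exact h2.congr_of_eventuallyEq (Filter.Eventually.of_forall fun n => by simp)
  have hQ : HasDerivAt (fun n : ℝ => q3*n^3 + q2*n^2 + q1*n + q0)
      (q3*(3*2^2) + q2*(2*2) + q1) 2 := by
    have h := ((((hasDerivAt_pow 3 (2:ℝ)).const_mul q3).add
        ((hasDerivAt_pow 2 (2:ℝ)).const_mul q2)).add
        ((hasDerivAt_id (2:ℝ)).const_mul q1)).add_const q0
    have h2 := h.congr_deriv (show _ = q3*(3*2^2) + q2*(2*2) + q1 by norm_num)
    exact h2.congr_of_eventuallyEq (Filter.Eventually.of_forall fun n => by simp)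
  have hG : HasDerivAt G
      ((Real.exp ((-c/2)*2) * (-c/2)) * (p3*2^3 + p2*2^2 + p1*2 + p0)
        + Real.exp ((-c/2)*2) * (p3*(3*2^2) + p2*(2*2) + p1)
        + (q3*(3*2^2) + q2*(2*2) + q1)) 2 := by
    exact (hexp.mul hP).add hQ
  set D : ℝ := (Real.exp ((-c/2)*2) * (-c/2)) * (p3*2^3 + p2*2^2 + p1*2 + p0)
        + Real.exp ((-c/2)*2) * (p3*(3*2^2) + p2*(2*2) + p1)
        + (q3*(3*2^2) + q2*(2*2) + q1) with hD
  have hslope : Filter.Tendsto (fun n => (G n - G 2)/(n - 2))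
      (nhdsWithin (2 : ℝ) {(2 : ℝ)}ᶜ) (nhds D) := by
    have h := hasDerivAt_iff_tendsto_slope.mp hG
    refine h.congr fun n => ?_
    simp [slope_def_field]
  have hcont : Filter.Tendsto (fun n : ℝ => (12*a^2*n*(n+2)*(n+4))⁻¹)
      (nhdsWithin (2 : ℝ) {(2 : ℝ)}ᶜ) (nhds (576*a^2)⁻¹) := by
    have hcts : Filter.Tendsto (fun n : ℝ => 12*a^2*n*(n+2)*(n+4)) (nhds 2)
        (nhds (576*a^2)) := by
      have h := (Continuous.tendsto (by continuity :
          Continuous fun n : ℝ => 12*a^2*n*(n+2)*(n+4)) 2)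
      convert h using 2
      norm_num; ring
    have hne : (576*a^2 : ℝ) ≠ 0 := by positivity
    exact (hcts.inv₀ hne).mono_left nhdsWithin_le_nhds
  have hmul := hslope.mul hcont
  have heq : ∀ n : ℝ,
      ((1 - a) ^ (-(n / 2)) * (-a^3*n^3 - 6*a^3*n^2 + a^2*n^3 - 8*a^3*n + 30*a^2*n^2 + 152*a^2*n + 192*a^2 - 192*a*n - 768*a + 576) - a^2*n^3 - 6*a^2*n^2 + 88*a^2*n - 192*a^2 - 96*a*n + 768*a - 576) / (12*a^2*(n-2)*n*(n+2)*(n+4))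
      = (G n - G 2)/(n - 2) * (12*a^2*n*(n+2)*(n+4))⁻¹ := by
    intro n
    rw [hG2, Real.rpow_def_of_pos h1a]
    have harg : Real.log (1-a) * (-(n/2)) = (-c/2)*n := by rw [hc]; ring
    rw [harg]
    simp only [hGdef, hp3, hp2, hp1, hp0, hq3, hq2, hq1, hq0, sub_zero,
      div_eq_mul_inv, mul_inv]
    ring
  have hval : D * (576*a^2)⁻¹ =
      -((a^2 - 12*a + 12) * Real.log (1 - a)) / (24*a^2) - (2*a^2 - 9*a + 6) / (12*a*(1-a)) := by
    rw [hD, hexp2, ← hc]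
    field_simp
    ring
  rw [show (fun n : ℝ =>
        ((1 - a) ^ (-(n / 2)) * (-a^3*n^3 - 6*a^3*n^2 + a^2*n^3 - 8*a^3*n + 30*a^2*n^2 + 152*a^2*n + 192*a^2 - 192*a*n - 768*a + 576) - a^2*n^3 - 6*a^2*n^2 + 88*a^2*n - 192*a^2 - 96*a*n + 768*a - 576) / (12*a^2*(n-2)*n*(n+2)*(n+4)))
      = fun n => (G n - G 2)/(n - 2) * (12*a^2*n*(n+2)*(n+4))⁻¹ from funext heq]
  rw [← hval]
  exact hmul
end

section
/- Fix a real parameter a with a < 1 and a ≠ 0, and set E(n) = (1-a)^(-n/2) for real n. The function C_11 defined in the context tends, as real n tends to 2 with n ≠ 2, to the limit ((9a^2 - 38a + 3)·ln(1-a))/(6a^2) - (73a - 6)/(12a). (This is the paper's dimension n = 2 value of the coefficient C_11 in the heat invariant E_2 of the nonminimal operator on a 2-dimensional manifold with torsion.) -/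
open Filter Real

theorem stmt_14 (a : ℝ) (ha1 : a < 1) (ha0 : a ≠ 0) :
    Filter.Tendsto
      (fun n : ℝ =>
        ((1-a) * (1 - a) ^ (-(n / 2)) * (-9*a^2*n^2 - 18*a^2*n + 76*a*n + 152*a - 24) + 2*(-13*a^2*n^2 + 6*a^2*n + 76*a^2 - 32*a*n - 88*a + 12)) / (3*a^2*(n-2)*n*(n+2)))
      (nhdsWithin (2 : ℝ) {(2 : ℝ)}ᶜ)
      (nhds (((9*a^2 - 38*a + 3) * Real.log (1 - a)) / (6*a^2) - (73*a - 6) / (12*a))) := by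
  have hb : (0:ℝ) < 1 - a := by linarith
  have hbne : (1:ℝ) - a ≠ 0 := ne_of_gt hb
  set L := Real.log (1 - a) with hL
  set g : ℝ → ℝ := fun n =>
    (1-a) * (1 - a) ^ (-(n / 2)) * (-9*a^2*n^2 - 18*a^2*n + 76*a*n + 152*a - 24)
      + 2*(-13*a^2*n^2 + 6*a^2*n + 76*a^2 - 32*a*n - 88*a + 12) with hg_def
  have h22 : -((2:ℝ)/2) = -1 := by norm_num
  have hE2 : (1 - a) ^ (-((2:ℝ)/2)) = (1-a)⁻¹ := by
    rw [h22, Real.rpow_neg_one]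
  -- derivative of E at 2
  have hinner : HasDerivAt (fun n:ℝ => -(n/2)) (-(1/2)) 2 := by
    exact ((hasDerivAt_id (2:ℝ)).div_const 2).neg.congr_deriv (by norm_num)
  have houter : HasDerivAt (fun x:ℝ => (1-a) ^ x) ((1-a) ^ (-((2:ℝ)/2)) * L) (-((2:ℝ)/2)) :=
    (Real.hasStrictDerivAt_const_rpow hb _).hasDerivAt
  have hE : HasDerivAt (fun n:ℝ => (1-a) ^ (-(n/2))) ((1-a)⁻¹ * L * (-(1/2))) 2 := by
    have h := houter.comp 2 hinner
    rw [hE2] at h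
    simpa [Function.comp_def] using h
  have hid : HasDerivAt (fun n:ℝ => n) 1 2 := hasDerivAt_id 2
  have hsq : HasDerivAt (fun n:ℝ => n^2) 4 2 := by
    refine (hasDerivAt_pow 2 (2:ℝ)).congr_deriv ?_
    norm_num
  have hP : HasDerivAt (fun n:ℝ => (-(9*a^2))*n^2 + (-(18*a^2))*n + (76*a)*n + (152*a - 24))
      ((-(9*a^2))*4 + (-(18*a^2))*1 + (76*a)*1) 2 := by
    simpa using (((hsq.const_mul (-(9*a^2))).add (hid.const_mul (-(18*a^2)))).add
      (hid.const_mul (76*a))).add_const (152*a - 24)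
  have hQ : HasDerivAt (fun n:ℝ => (-(13*a^2))*n^2 + (6*a^2)*n + (-(32*a))*n + (76*a^2 - 88*a + 12))
      ((-(13*a^2))*4 + (6*a^2)*1 + (-(32*a))*1) 2 := by
    simpa using (((hsq.const_mul (-(13*a^2))).add (hid.const_mul (6*a^2))).add
      (hid.const_mul (-(32*a)))).add_const (76*a^2 - 88*a + 12)
  set Dval : ℝ := L*(36*a^2-152*a+12) - 146*a^2 + 12*a with hDval
  have hg' : HasDerivAt g Dval 2 := by
    have hBig := ((hE.const_mul (1-a)).mul hP).add (hQ.const_mul 2)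
    have hfun : g = fun n =>
        ((1-a) * (1 - a) ^ (-(n/2))) * ((-(9*a^2))*n^2 + (-(18*a^2))*n + (76*a)*n + (152*a - 24))
        + 2 * ((-(13*a^2))*n^2 + (6*a^2)*n + (-(32*a))*n + (76*a^2 - 88*a + 12)) := by
      funext n; simp only [hg_def]; ring
    rw [hfun]
    refine hBig.congr_deriv ?_
    rw [hE2]
    field_simp
    ring
  have hg2 : g 2 = 0 := by
    simp only [hg_def]
    rw [show -((2:ℝ)/2) = -1 by norm_num, Real.rpow_neg_one]
    field_simp
    ring
  rw [hasDerivAt_iff_tendsto_slope] at hg'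
  have hcont : Filter.Tendsto (fun n:ℝ => (3*a^2*n*(n+2))⁻¹) (nhdsWithin (2:ℝ) {(2:ℝ)}ᶜ)
      (nhds ((24*a^2)⁻¹)) := by
    have h1 : Filter.Tendsto (fun n:ℝ => 3*a^2*n*(n+2)) (nhds 2) (nhds (3*a^2*2*(2+2))) := by
      exact (((continuous_const.mul continuous_id).mul (continuous_id.add continuous_const)).tendsto 2)
    have h2 : Filter.Tendsto (fun n:ℝ => (3*a^2*n*(n+2))⁻¹) (nhdsWithin (2:ℝ) {(2:ℝ)}ᶜ)
        (nhds ((3*a^2*2*(2+2))⁻¹)) :=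
      (h1.mono_left nhdsWithin_le_nhds).inv₀ (by positivity)
    convert h2 using 2
    ring
  have hprod := hg'.mul hcont
  have hev : ∀ᶠ n in nhdsWithin (2:ℝ) {(2:ℝ)}ᶜ,
      slope g 2 n * (3*a^2*n*(n+2))⁻¹ =
      ((1-a) * (1 - a) ^ (-(n / 2)) * (-9*a^2*n^2 - 18*a^2*n + 76*a*n + 152*a - 24) + 2*(-13*a^2*n^2 + 6*a^2*n + 76*a^2 - 32*a*n - 88*a + 12)) / (3*a^2*(n-2)*n*(n+2)) := by
    have h1 : ∀ᶠ n in nhdsWithin (2:ℝ) {(2:ℝ)}ᶜ, n ∈ Set.Ioo (1:ℝ) 3 :=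
      eventually_nhdsWithin_of_eventually_nhds (Ioo_mem_nhds (by norm_num) (by norm_num))
    have h2 : ∀ᶠ n in nhdsWithin (2:ℝ) {(2:ℝ)}ᶜ, n ≠ 2 := by
      filter_upwards [self_mem_nhdsWithin] with n hn
      simpa using hn
    filter_upwards [h1, h2] with n hn hn2
    have hn0 : n ≠ 0 := by intro h; rw [h] at hn; exact absurd hn.1 (by norm_num)
    have hn2' : n + 2 ≠ 0 := by have := hn.1; intro h; linarith
    have hnm : n - 2 ≠ 0 := sub_ne_zero.mpr hn2
    rw [slope_def_field, hg2]
    field_simp [hg_def]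
    try ring
    try exact Or.inl trivial
  have := hprod.congr' hev
  convert this using 2
  rw [hDval]
  field_simp
  ring
end

section
/- Fix a real parameter a with a < 1 and a ≠ 0, and set E(n) = (1-a)^(-n/2) for real n. The function C_12 defined in the context tends, as real n tends to 2 with n ≠ 2, to the limit ((10a^2 - 38a - 3)·ln(1-a))/(6a^2) - (79a + 6)/(12a). (This is the paper's dimension n = 2 value of the coefficient C_12 in the heat invariant E_2 of the nonminimal operator on a 2-dimensional manifold with torsion.) -/
open Real Filter

theorem stmt_15 (a : ℝ) (ha1 : a < 1) (ha0 : a ≠ 0) :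
    Filter.Tendsto
      (fun n : ℝ =>
        (2*(1-a) * (1 - a) ^ (-(n / 2)) * (-5*a^2*n^2 - 10*a^2*n + 38*a*n + 76*a + 12) - 31*a^2*n^2 + 26*a^2*n + 152*a^2 - 88*a*n - 128*a - 24) / (3*a^2*(n-2)*n*(n+2)))
      (nhdsWithin (2 : ℝ) {(2 : ℝ)}ᶜ)
      (nhds (((10*a^2 - 38*a - 3) * Real.log (1 - a)) / (6*a^2) - (79*a + 6) / (12*a))) := by
  have hb : (0:ℝ) < 1 - a := by linarith
  have hb' : (1:ℝ) - a ≠ 0 := ne_of_gt hb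
  set f : ℝ → ℝ := fun n => 2*(1-a) * (1 - a) ^ (-(n / 2)) * (-5*a^2*n^2 - 10*a^2*n + 38*a*n + 76*a + 12) - 31*a^2*n^2 + 26*a^2*n + 152*a^2 - 88*a*n - 128*a - 24 with hf
  set L : ℝ := Real.log (1-a) * (40*a^2-152*a-12) - 158*a^2 - 12*a with hLdef
  have hE2 : (1 - a) ^ (-(2 / 2) : ℝ) = (1-a)⁻¹ := by
    norm_num [Real.rpow_neg_one]
  have hf2 : f 2 = 0 := by
    simp only [hf, hE2]
    field_simp
    ring
  -- derivative pieces
  have hinner : HasDerivAt (fun n : ℝ => -(n/2)) (-(1/2)) 2 := by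
    exact ((hasDerivAt_id (2:ℝ)).div_const 2).neg.congr_deriv (by norm_num)
  have hexp : HasDerivAt (fun n : ℝ => (1-a) ^ (-(n/2))) ((1-a) ^ (-(2/2):ℝ) * Real.log (1-a) * (-(1/2))) 2 := by
    exact ((hasStrictDerivAt_const_rpow hb (-(2/2))).hasDerivAt).comp 2 hinner
  have hid : HasDerivAt (fun n:ℝ => n) 1 2 := hasDerivAt_id 2
  have hsq : HasDerivAt (fun n:ℝ => n^2) (2*2) 2 := by simpa using hasDerivAt_pow 2 (2:ℝ)
  have hP : HasDerivAt (fun n:ℝ => -5*a^2*n^2 - 10*a^2*n + 38*a*n + 76*a + 12) (-30*a^2 + 38*a) 2 := by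
    have h := ((((hsq.const_mul (-5*a^2)).sub (hid.const_mul (10*a^2))).add (hid.const_mul (38*a))).add_const (76*a + 12))
    convert h using 1
    · rfl
    · rfl
    · funext n; simp only [Pi.add_apply, Pi.sub_apply]; ring
    · ring
  have hQ : HasDerivAt (fun n:ℝ => -31*a^2*n^2 + 26*a^2*n + 152*a^2 - 88*a*n - 128*a - 24) (-98*a^2 - 88*a) 2 := by
    have h := (((((hsq.const_mul (-31*a^2)).add (hid.const_mul (26*a^2))).add_const (152*a^2)).sub (hid.const_mul (88*a))).add_const (-128*a - 24))
    convert h using 1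
    · rfl
    · rfl
    · funext n; simp only [Pi.add_apply, Pi.sub_apply]; ring
    · ring
  have hfg : f = fun n => (2*(1-a)) * ((1-a)^(-(n/2))) * (-5*a^2*n^2 - 10*a^2*n + 38*a*n + 76*a + 12) + (-31*a^2*n^2 + 26*a^2*n + 152*a^2 - 88*a*n - 128*a - 24) := by
    funext n; simp only [hf]; ring
  have hF : HasDerivAt f L 2 := by
    rw [hfg]
    have h := ((hexp.const_mul (2*(1-a))).mul hP).add hQ
    convert h using 1
    · rfl
    · rfl
    · rfl
    simp only [hE2, hLdef]
    have hE2' : (1 - a) ^ (-(2 / 2 : ℝ)) = (1-a)⁻¹ := hE2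
    field_simp
    ring
  have hslope : Tendsto (slope f 2) (nhdsWithin (2:ℝ) {(2:ℝ)}ᶜ) (nhds L) :=
    hasDerivAt_iff_tendsto_slope.mp hF
  have hrest : Tendsto (fun n:ℝ => (3*a^2*n*(n+2))⁻¹) (nhdsWithin (2:ℝ) {(2:ℝ)}ᶜ) (nhds ((24*a^2)⁻¹)) := by
    have hc : Tendsto (fun n:ℝ => 3*a^2*n*(n+2)) (nhdsWithin (2:ℝ) {(2:ℝ)}ᶜ) (nhds (24*a^2)) := by
      have : Continuous (fun n:ℝ => 3*a^2*n*(n+2)) := by continuity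
      have h := (this.tendsto 2).mono_left (nhdsWithin_le_nhds (s := {(2:ℝ)}ᶜ))
      have e : (3:ℝ)*a^2*2*(2+2) = 24*a^2 := by ring
      rwa [e] at h
    exact hc.inv₀ (by positivity)
  have hmain := hslope.mul hrest
  have heq : (fun n : ℝ =>
        (2*(1-a) * (1 - a) ^ (-(n / 2)) * (-5*a^2*n^2 - 10*a^2*n + 38*a*n + 76*a + 12) - 31*a^2*n^2 + 26*a^2*n + 152*a^2 - 88*a*n - 128*a - 24) / (3*a^2*(n-2)*n*(n+2)))
      =ᶠ[nhdsWithin (2:ℝ) {(2:ℝ)}ᶜ] (fun n => slope f 2 n * (3*a^2*n*(n+2))⁻¹) := by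
    filter_upwards [self_mem_nhdsWithin] with n hn
    have hn2 : n - 2 ≠ 0 := sub_ne_zero.mpr hn
    rw [slope_def_field, hf2]
    simp only [hf, div_eq_mul_inv, mul_inv, sub_zero]
    ring
  have := hmain.congr' heq.symm
  convert this using 2
  rw [hLdef]
  field_simp
  ring
end

section
/- Fix a real parameter a with a < 1 and a ≠ 0, and set E(n) = (1-a)^(-n/2) for real n. The function C_14 defined in the context tends, as real n tends to 2 with n ≠ 2, to the limit ((a^2 - 4a + 2)·ln(1-a))/(4a^2) - (3a - 2)/(4a). (This is the paper's dimension n = 2 value of the coefficient C_14 in the heat invariant E_2 of the nonminimal operator on a 2-dimensional manifold with torsion.) -/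
open Filter Real

theorem stmt_16 (a : ℝ) (ha1 : a < 1) (ha0 : a ≠ 0) :
    Filter.Tendsto
      (fun n : ℝ =>
        ((1-a) * (1 - a) ^ (-(n / 2)) * (-a^2*n^2 - 2*a^2*n + 8*a*n + 16*a - 16) - a^2*n^2 - 2*a^2*n + 16*a^2 - 32*a + 16) / (2*a^2*(n-2)*n*(n+2)))
      (nhdsWithin (2 : ℝ) {(2 : ℝ)}ᶜ)
      (nhds (((a^2 - 4*a + 2) * Real.log (1 - a)) / (4*a^2) - (3*a - 2) / (4*a))) := by
  have hc : (0:ℝ) < 1 - a := by linarith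
  set L := Real.log (1 - a) with hL
  set F : ℝ → ℝ := fun n =>
    (1-a) * (1 - a) ^ (-(n / 2)) * (-a^2*n^2 - 2*a^2*n + 8*a*n + 16*a - 16)
      - a^2*n^2 - 2*a^2*n + 16*a^2 - 32*a + 16 with hF
  have hE2 : (1 - a) ^ (-(2 / 2 : ℝ) : ℝ) = (1-a)⁻¹ := by
    norm_num [Real.rpow_neg_one]
  -- derivative of F at 2
  have hd : HasDerivAt F ((4*a^2-16*a+8)*L - 12*a^2 + 8*a) 2 := by
    have hinner : HasDerivAt (fun n : ℝ => -(n / 2)) (-(1/2)) 2 := by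
      simpa [Pi.neg_def] using ((hasDerivAt_id (2:ℝ)).div_const 2).neg
    have h1 : HasDerivAt (fun n : ℝ => (1 - a) ^ (-(n / 2)))
        ((1 - a) ^ (-(2 / 2 : ℝ) : ℝ) * L * (-(1/2))) 2 := by
      have := ((Real.hasStrictDerivAt_const_rpow hc (-(2/2) : ℝ)).hasDerivAt).comp 2 hinner
      simpa [mul_assoc, Function.comp_def] using this
    have hid : HasDerivAt (fun n : ℝ => n) 1 2 := hasDerivAt_id 2
    have hn2 : HasDerivAt (fun n : ℝ => n^2) (2*2) 2 := by
      simpa using hasDerivAt_pow 2 (2:ℝ)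
    have hP : HasDerivAt (fun n : ℝ => -a^2*n^2 - 2*a^2*n + 8*a*n + 16*a - 16)
        (-a^2*(2*2) - 2*a^2 + 8*a) 2 := by
      have := ((((hn2.const_mul (-a^2)).sub (hid.const_mul (2*a^2))).add
        (hid.const_mul (8*a))).add_const (16*a)).sub_const 16
      convert this using 2
      · rfl
      · rfl
      · simp only [Pi.add_apply, Pi.sub_apply]
      all_goals ring
    have hQ : HasDerivAt (fun n : ℝ => - a^2*n^2 - 2*a^2*n + 16*a^2 - 32*a + 16)
        (-a^2*(2*2) - 2*a^2) 2 := by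
      have := ((((hn2.const_mul (-a^2)).sub (hid.const_mul (2*a^2))).add_const
        (16*a^2)).sub_const (32*a)).add_const 16
      convert this using 2
      · rfl
      · rfl
      · simp only [Pi.add_apply, Pi.sub_apply]
      all_goals ring
    have := ((h1.const_mul (1-a)).mul hP).add hQ
    have heq : F = fun n =>
        (1-a) * (1 - a) ^ (-(n / 2)) * (-a^2*n^2 - 2*a^2*n + 8*a*n + 16*a - 16)
          + (- a^2*n^2 - 2*a^2*n + 16*a^2 - 32*a + 16) := by
      funext n; simp [hF]; ring
    rw [heq]
    convert this using 1
    · rfl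
    · rfl
    · rfl
    rw [hE2]
    have h1a : (1-a) * (1-a)⁻¹ = 1 := mul_inv_cancel₀ hc.ne'
    field_simp
    ring
  have hF2 : F 2 = 0 := by
    simp only [hF]
    rw [show (-(((2:ℝ))/2)) = (-1:ℝ) by norm_num, Real.rpow_neg_one]
    field_simp
    ring
  have hslope : Tendsto (fun n => (F n - F 2) / (n - 2)) (nhdsWithin (2:ℝ) {(2:ℝ)}ᶜ)
      (nhds ((4*a^2-16*a+8)*L - 12*a^2 + 8*a)) := by
    have := hasDerivAt_iff_tendsto_slope.mp hd
    refine this.congr fun n => ?_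
    rw [slope_def_field]
  have hg : Tendsto (fun n : ℝ => 1/(2*a^2*n*(n+2))) (nhdsWithin (2:ℝ) {(2:ℝ)}ᶜ)
      (nhds (1/(16*a^2))) := by
    have hcont : ContinuousAt (fun n : ℝ => 1/(2*a^2*n*(n+2))) 2 := by
      apply ContinuousAt.div continuousAt_const (by fun_prop)
      have : a^2 ≠ 0 := pow_ne_zero 2 ha0
      intro h; apply this; nlinarith [sq_nonneg a]
    have h16 : (1:ℝ)/(2*a^2*2*(2+2)) = 1/(16*a^2) := by ring_nf
    simpa [h16] using hcont.continuousWithinAt.tendsto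
  have hmul := hslope.mul hg
  have hval : ((4*a^2-16*a+8)*L - 12*a^2 + 8*a) * (1/(16*a^2))
      = ((a^2 - 4*a + 2) * L) / (4*a^2) - (3*a - 2) / (4*a) := by
    field_simp
    ring
  rw [hval] at hmul
  refine hmul.congr' ?_
  filter_upwards [self_mem_nhdsWithin] with n hn
  have hn2 : n - 2 ≠ 0 := sub_ne_zero.mpr hn
  rw [hF2, sub_zero]
  rw [div_mul_div_comm, mul_one]
  congr 1
  ring
end

section
/- Fix a real parameter a with a < 1 and a ≠ 0, and set E(n) = (1-a)^(-n/2) for real n. The function C_15 defined in the context tends, as real n tends to 2 with n ≠ 2, to the limit -((a - 3)·ln(1-a))/(12a) - (7a - 10)/(24·(1-a)). (This is the paper's dimension n = 2 value of the coefficient C_15 in the heat invariant E_2 of the nonminimal operator on a 2-dimensional manifold with torsion.) -/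
theorem stmt_17 (a : ℝ) (ha1 : a < 1) (ha0 : a ≠ 0) :
    Filter.Tendsto
      (fun n : ℝ =>
        ((1 - a) ^ (-(n / 2)) * (-a^2*n^2 - 2*a^2*n + a*n^2 + 8*a*n + 12*a - 24) + a*n^3 - a*n^2 - 12*a + 24) / (6*a*(n-2)*n*(n+2)))
      (nhdsWithin (2 : ℝ) {(2 : ℝ)}ᶜ)
      (nhds (-((a - 3) * Real.log (1 - a)) / (12*a) - (7*a - 10) / (24*(1-a)))) := by
  have hb : (0:ℝ) < 1 - a := by linarith
  have hb' : (1:ℝ) - a ≠ 0 := ne_of_gt hb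
  set G : ℝ → ℝ := fun n =>
    ((1 - a) ^ (-(n / 2)) * (-a^2*n^2 - 2*a^2*n + a*n^2 + 8*a*n + 12*a - 24) + (a*n^3 - a*n^2 - 12*a + 24)) / (6*a*n*(n+2)) with hGdef
  -- derivative pieces
  have hinner : HasDerivAt (fun n : ℝ => -(n/2)) (-(1/2)) 2 := by
    simpa [Pi.neg_def] using ((hasDerivAt_id (2:ℝ)).div_const 2).neg
  have hE : HasDerivAt (fun n : ℝ => (1 - a) ^ (-(n / 2)))
      ((1-a) ^ (-(2/2) : ℝ) * Real.log (1-a) * (-(1/2))) 2 := by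
    have := ((Real.hasStrictDerivAt_const_rpow hb (-(2/2))).hasDerivAt).comp 2 hinner
    simpa [Function.comp_def] using this
  have hid : HasDerivAt (fun n : ℝ => n) 1 2 := hasDerivAt_id 2
  have h2 : HasDerivAt (fun n : ℝ => n^2) 4 2 := by
    have := hid.pow 2; norm_num at this; simpa [Pi.pow_def] using this
  have h3 : HasDerivAt (fun n : ℝ => n^3) 12 2 := by
    have := hid.pow 3; norm_num at this; simpa [Pi.pow_def] using this
  have hP : HasDerivAt (fun n : ℝ => -a^2*n^2 - 2*a^2*n + a*n^2 + 8*a*n + 12*a - 24)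
      (-a^2*4 - 2*a^2*1 + a*4 + 8*a*1) 2 := by
    have : HasDerivAt (𝕜 := ℝ) (F := ℝ) _ _ 2 := ((((h2.const_mul (-a^2)).sub ((hid.const_mul (2*a^2)))).add (h2.const_mul a)).add (hid.const_mul (8*a))).add_const (12*a - 24)
    convert this using 2 <;> simp only [Pi.add_apply, Pi.sub_apply] <;> ring
  have hQ : HasDerivAt (fun n : ℝ => a*n^3 - a*n^2 - 12*a + 24) (a*12 - a*4) 2 := by
    have : HasDerivAt (𝕜 := ℝ) (F := ℝ) _ _ 2 := ((h3.const_mul a).sub (h2.const_mul a)).add_const (-12*a + 24)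
    convert this using 2 <;> simp only [Pi.add_apply, Pi.sub_apply] <;> ring
  have hN : HasDerivAt (fun n : ℝ =>
      (1 - a) ^ (-(n / 2)) * (-a^2*n^2 - 2*a^2*n + a*n^2 + 8*a*n + 12*a - 24) + (a*n^3 - a*n^2 - 12*a + 24))
      (((1-a) ^ (-(2/2) : ℝ) * Real.log (1-a) * (-(1/2))) * (-a^2*2^2 - 2*a^2*2 + a*2^2 + 8*a*2 + 12*a - 24)
        + (1-a) ^ (-(2/2:ℝ)) * (-a^2*4 - 2*a^2*1 + a*4 + 8*a*1) + (a*12 - a*4)) 2 := by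
    have : HasDerivAt (𝕜 := ℝ) (F := ℝ) _ _ 2 := (hE.mul hP).add hQ
    convert this using 2 <;> norm_num
  have hD : HasDerivAt (fun n : ℝ => 6*a*n*(n+2)) (6*a*1*(2+2) + 6*a*2*1) 2 :=
    (hid.const_mul (6*a)).mul (hid.add_const 2)
  have hrp : ((1:ℝ)-a) ^ (-(2/2) : ℝ) = (1-a)⁻¹ := by
    norm_num [Real.rpow_neg_one]
  have hG2 : G 2 = 0 := by
    simp only [hGdef, hrp]
    field_simp
    ring
  have hG : HasDerivAt G (-((a - 3) * Real.log (1 - a)) / (12*a) - (7*a - 10) / (24*(1-a))) 2 := by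
    have hD2 : (6*a*2*(2+2) : ℝ) ≠ 0 := by intro h; apply ha0; linarith [h]
    have : HasDerivAt (𝕜 := ℝ) (F := ℝ) _ _ 2 := hN.div hD hD2
    convert this using 1
    · rfl
    rw [hrp]
    field_simp
    ring
  have hslope := hasDerivAt_iff_tendsto_slope.mp hG
  refine hslope.congr' ?_
  filter_upwards [self_mem_nhdsWithin] with n hn
  have hn2 : n - 2 ≠ 0 := sub_ne_zero.mpr hn
  rw [slope_def_field, hG2, hGdef]
  field_simp
  ring
end

section
/- Fix a real parameter a with a < 1 and a ≠ 0, and set E(n) = (1-a)^(-n/2) for real n. The function C_16 defined in the context tends, as real n tends to 2 with n ≠ 2, to the limit -((a^2 - 6)·ln(1-a))/(24a^2) - (3a^2 + a - 6)/(24a·(1-a)). (This is the paper's dimension n = 2 value of the coefficient C_16 in the heat invariant E_2 of the nonminimal operator on a 2-dimensional manifold with torsion.) -/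
set_option maxHeartbeats 2000000 in
theorem stmt_18 (a : ℝ) (ha1 : a < 1) (ha0 : a ≠ 0) :
    Filter.Tendsto
      (fun n : ℝ =>
        ((1 - a) ^ (-(n / 2)) * (-a^3*n^3 - 6*a^3*n^2 + a^2*n^3 - 8*a^3*n + 6*a^2*n^2 + 8*a^2*n + 48*a*n + 192*a - 288) + a^2*n^4 + 3*a^2*n^3 + 2*a^2*n^2 - 48*a^2*n + 96*a*n - 192*a + 288) / (12*a^2*(n-2)*n*(n+2)*(n+4)))
      (nhdsWithin (2 : ℝ) {(2 : ℝ)}ᶜ)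
      (nhds (-((a^2 - 6) * Real.log (1 - a)) / (24*a^2) - (3*a^2 + a - 6) / (24*a*(1-a)))) := by
  have h1a : (0:ℝ) < 1 - a := by linarith
  set L : ℝ := Real.log (1 - a) with hL
  set E : ℝ → ℝ := fun n => Real.exp (L * -(n / 2)) with hE
  -- rewrite rpow as exp
  have hrw : ∀ n : ℝ, (1 - a) ^ (-(n / 2)) = E n := fun n => by
    rw [Real.rpow_def_of_pos h1a]
  -- derivative of E at 2
  have hderiv : HasDerivAt E (Real.exp (L * -(2 / 2)) * (L * -(1 / 2))) 2 := by
    have h1 : HasDerivAt (fun n : ℝ => L * -(n / 2)) (L * -(1 / 2)) 2 := by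
      simpa using (((hasDerivAt_id (2:ℝ)).div_const 2).neg.const_mul L)
    exact h1.exp
  have hslope := hasDerivAt_iff_tendsto_slope.mp hderiv
  have hE2 : E 2 = (1 - a)⁻¹ := by
    have : L * -(2 / 2) = -L := by ring
    rw [hE]; simp only [this]
    rw [Real.exp_neg, Real.exp_log h1a]
  -- auxiliary polynomials
  set P : ℝ → ℝ := fun n => -a^3*n^3 - 6*a^3*n^2 + a^2*n^3 - 8*a^3*n + 6*a^2*n^2 + 8*a^2*n + 48*a*n + 192*a - 288 with hP
  set T : ℝ → ℝ := fun n => (a^2 - a^3) * (n^3 + 6*n^2 + 20*n) - 96*a^2 + 144*a with hT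
  set g : ℝ → ℝ := fun n => (P n * slope E 2 n + T n * (1 - a)⁻¹) * (12*a^2*n*(n+2)*(n+4))⁻¹ with hg
  have hIoo : ∀ᶠ n in nhdsWithin (2:ℝ) {(2:ℝ)}ᶜ, n ∈ Set.Ioo (1:ℝ) 3 :=
    eventually_nhdsWithin_of_eventually_nhds (Ioo_mem_nhds (by norm_num) (by norm_num))
  have heq : ∀ᶠ n in nhdsWithin (2:ℝ) {(2:ℝ)}ᶜ,
      ((1 - a) ^ (-(n / 2)) * (-a^3*n^3 - 6*a^3*n^2 + a^2*n^3 - 8*a^3*n + 6*a^2*n^2 + 8*a^2*n + 48*a*n + 192*a - 288) + a^2*n^4 + 3*a^2*n^3 + 2*a^2*n^2 - 48*a^2*n + 96*a*n - 192*a + 288) / (12*a^2*(n-2)*n*(n+2)*(n+4)) = g n := by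
    filter_upwards [hIoo, self_mem_nhdsWithin] with n hI hn
    have hn2 : n - 2 ≠ 0 := sub_ne_zero.mpr hn
    have hn0 : n ≠ 0 := by rcases hI with ⟨h1, h2⟩; linarith
    have hnp2 : n + 2 ≠ 0 := by rcases hI with ⟨h1, h2⟩; linarith
    have hnp4 : n + 4 ≠ 0 := by rcases hI with ⟨h1, h2⟩; linarith
    rw [hrw n]
    simp only [hg, hP, hT]
    rw [slope_def_field, hE2]
    have h1a' : (1:ℝ) - a ≠ 0 := ne_of_gt h1a
    field_simp
    ring
  refine Filter.Tendsto.congr' (Filter.EventuallyEq.symm heq) ?_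
  -- limit of g
  have hcontP : Filter.Tendsto P (nhdsWithin 2 {(2:ℝ)}ᶜ) (nhds (P 2)) :=
    ((Continuous.tendsto (by continuity) 2)).mono_left nhdsWithin_le_nhds
  have hcontT : Filter.Tendsto (fun n => T n * (1 - a)⁻¹) (nhdsWithin 2 {(2:ℝ)}ᶜ) (nhds (T 2 * (1 - a)⁻¹)) :=
    ((Continuous.tendsto (by continuity) 2)).mono_left nhdsWithin_le_nhds
  have hden : Filter.Tendsto (fun n : ℝ => (12*a^2*n*(n+2)*(n+4))⁻¹) (nhdsWithin 2 {(2:ℝ)}ᶜ)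
      (nhds (12*a^2*2*(2+2)*(2+4))⁻¹) := by
    have hne : (12*a^2*2*(2+2)*(2+4) : ℝ) ≠ 0 := by positivity
    exact (((Continuous.tendsto (by continuity) 2)).inv₀ hne).mono_left nhdsWithin_le_nhds
  have hlim : Filter.Tendsto g (nhdsWithin 2 {(2:ℝ)}ᶜ)
      (nhds ((P 2 * (Real.exp (L * -(2 / 2)) * (L * -(1 / 2))) + T 2 * (1 - a)⁻¹) * (12*a^2*2*(2+2)*(2+4))⁻¹)) :=
    ((hcontP.mul hslope).add hcontT).mul hden
  convert hlim using 2
  have hexp2 : Real.exp (L * -(2 / 2)) = (1 - a)⁻¹ := by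
    have : L * -(2 / 2) = -L := by ring
    rw [this, Real.exp_neg, Real.exp_log h1a]
  rw [hexp2]
  simp only [hP, hT]
  have h1a' : (1:ℝ) - a ≠ 0 := ne_of_gt h1a
  field_simp
  ring
end

section
/- Fix a real parameter a with a < 1 and a ≠ 0, and set E(n) = (1-a)^(-n/2) for real n. The function D_5 defined in the context tends, as real n tends to 2 with n ≠ 2, to the limit -((a - 4)·ln(1-a))/(2a) - (11a - 14)/(6·(1-a)). (This is the paper's dimension n = 2 value of the coefficient C_5 of the term D_α T^α in the Lorentz trace tr_L E_2 of the heat invariant E_2 of the nonminimal operator on a 2-dimensional manifold with torsion.) -/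
theorem stmt_19 (a : ℝ) (ha1 : a < 1) (ha0 : a ≠ 0) :
    Filter.Tendsto
      (fun n : ℝ =>
        (-((1 - a) ^ (-(n / 2))) * (a^2*n^2 + 4*a^2*n - a*n^2 - 10*a*n - 36*a + 48) + a*n^3 - 3*a*n^2 + 14*a*n - 36*a + 48) / (6*a*(n-2)*n))
      (nhdsWithin (2 : ℝ) {(2 : ℝ)}ᶜ)
      (nhds (-((a - 4) * Real.log (1 - a)) / (2*a) - (11*a - 14) / (6*(1-a)))) := by
  have hc : (0:ℝ) < 1 - a := by linarith
  have hc' : (1:ℝ) - a ≠ 0 := ne_of_gt hc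
  set c : ℝ := 1 - a with hcdef
  set F : ℝ → ℝ := fun n =>
    -((c) ^ (-(n / 2))) * (a^2*n^2 + 4*a^2*n - a*n^2 - 10*a*n - 36*a + 48)
      + (a*n^3 - 3*a*n^2 + 14*a*n - 36*a + 48) with hFdef
  -- derivative of the exponential part
  have hE : HasDerivAt (fun n : ℝ => c ^ (-(n / 2)))
      (c ^ (-(2 / 2 : ℝ)) * Real.log c * (-(1/2))) 2 := by
    have h1 : HasDerivAt (fun x : ℝ => c ^ x) (c ^ (-(2/2:ℝ)) * Real.log c) (-(2/2 : ℝ)) :=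
      (Real.hasStrictDerivAt_const_rpow hc _).hasDerivAt
    have h2 : HasDerivAt (fun n : ℝ => -(n / 2)) (-(1/2) : ℝ) 2 := by
      exact ((hasDerivAt_id (2:ℝ)).div_const 2).neg.congr_deriv (by norm_num)
    exact h1.comp 2 h2
  have hP : HasDerivAt (fun n : ℝ => a^2*n^2 + 4*a^2*n - a*n^2 - 10*a*n - 36*a + 48)
      (a^2*(2*2) + 4*a^2 - a*(2*2) - 10*a) 2 := by
    have h2 : HasDerivAt (fun n : ℝ => n^2) (2*2 : ℝ) 2 := by
      simpa using hasDerivAt_pow 2 (2:ℝ)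
    have hid : HasDerivAt (fun n : ℝ => n) (1:ℝ) 2 := hasDerivAt_id 2
    simpa using ((((((h2.const_mul (a^2)).add ((hid.const_mul (4*a^2)))).sub
      (h2.const_mul a)).sub (hid.const_mul (10*a))).sub_const (36*a)).add_const 48).congr_deriv
      (by ring)
  have hQ : HasDerivAt (fun n : ℝ => a*n^3 - 3*a*n^2 + 14*a*n - 36*a + 48)
      (a*(3*2^2) - 3*a*(2*2) + 14*a) 2 := by
    have h3 : HasDerivAt (fun n : ℝ => n^3) (3*2^2 : ℝ) 2 := by
      simpa using hasDerivAt_pow 3 (2:ℝ)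
    have h2 : HasDerivAt (fun n : ℝ => n^2) (2*2 : ℝ) 2 := by
      simpa using hasDerivAt_pow 2 (2:ℝ)
    have hid : HasDerivAt (fun n : ℝ => n) (1:ℝ) 2 := hasDerivAt_id 2
    simpa using (((((h3.const_mul a).sub (h2.const_mul (3*a))).add
      (hid.const_mul (14*a))).sub_const (36*a)).add_const 48).congr_deriv (by ring)
  set D : ℝ :=
     (-(c ^ (-(2 / 2 : ℝ)) * Real.log c * (-(1/2)))) *
        (a^2*2^2 + 4*a^2*2 - a*2^2 - 10*a*2 - 36*a + 48)
      + (-(c ^ (-(2 / 2 : ℝ)))) * (a^2*(2*2) + 4*a^2 - a*(2*2) - 10*a)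
      + (a*(3*2^2) - 3*a*(2*2) + 14*a) with hDdef
  have hF : HasDerivAt F D 2 := (hE.neg.mul hP).add hQ
  have hval : c ^ (-(2/2 : ℝ)) = (1-a)⁻¹ := by
    rw [show (-(2/2 : ℝ)) = -1 by norm_num, Real.rpow_neg_one, hcdef]
  have hF2 : F 2 = 0 := by
    simp only [hFdef, hval]
    field_simp [show (1:ℝ) - a ≠ 0 from hc']
    ring
  have hslope : Filter.Tendsto (slope F 2) (nhdsWithin (2:ℝ) {(2:ℝ)}ᶜ) (nhds D) :=
    hasDerivAt_iff_tendsto_slope.mp hF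
  have hden : Filter.Tendsto (fun n : ℝ => (6*a*n)⁻¹) (nhdsWithin (2:ℝ) {(2:ℝ)}ᶜ)
      (nhds ((6*a*2)⁻¹)) := by
    have hcont : ContinuousAt (fun n : ℝ => (6*a*n)⁻¹) 2 := by
      have : (6*a*2 : ℝ) ≠ 0 := by positivity
      exact ((continuous_const.mul continuous_id).continuousAt).inv₀ this
    exact hcont.tendsto.mono_left nhdsWithin_le_nhds
  have hmul := hslope.mul hden
  have heq : ∀ n : ℝ, slope F 2 n * (6*a*n)⁻¹ =
      (-((1 - a) ^ (-(n / 2))) * (a^2*n^2 + 4*a^2*n - a*n^2 - 10*a*n - 36*a + 48) + a*n^3 - 3*a*n^2 + 14*a*n - 36*a + 48) / (6*a*(n-2)*n) := by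
    intro n
    rw [slope_def_field, hF2, sub_zero]
    simp only [hFdef, hcdef, div_eq_mul_inv, mul_inv]
    ring
  have hfinal : (-((a - 4) * Real.log (1 - a)) / (2*a) - (11*a - 14) / (6*(1-a)))
      = D * (6*a*2)⁻¹ := by
    rw [hDdef, hval, hcdef]
    field_simp [show (1:ℝ) - a ≠ 0 from hc']
    ring
  rw [hfinal]
  exact Filter.Tendsto.congr (fun n => heq n) hmul
end
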